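/- For every z ∈ ℂ with Re(z) > 0, the integral (1/(2π)) · ∫_{−∞}^{∞} Γ(1+it) · z^{−(1+it)} dt converges absolutely and equals e^{−z}, where z^{s} = exp(s · Log z) with the principal branch of the logarithm. -/

import Mathlib

open MeasureTheory Set Filter


lemma gamma_line_sq (t : ℝ) (ht : t ≠ 0) :
    ‖Complex.Gamma (1 + t * Complex.I)‖ ^ 2
      = Real.pi * t / Real.sinh (Real.pi * t) := by
  have htI : (t : ℂ) * Complex.I ≠ 0 := by
    simp [Complex.ext_iff, ht]
  have h1 : Complex.Gamma ((t : ℂ) * Complex.I) * Complex.Gamma (1 - t * Complex.I)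
      = (Real.pi : ℂ) / Complex.sin (Real.pi * (t * Complex.I)) :=
    Complex.Gamma_mul_Gamma_one_sub _
  have h2 : Complex.Gamma (1 + t * Complex.I)
      = (t : ℂ) * Complex.I * Complex.Gamma ((t : ℂ) * Complex.I) := by
    rw [add_comm]
    exact Complex.Gamma_add_one _ htI
  have h3 : Complex.sin ((Real.pi : ℂ) * (t * Complex.I))
      = (Real.sinh (Real.pi * t) : ℝ) * Complex.I := by
    rw [show (Real.pi : ℂ) * (t * Complex.I) = ((Real.pi * t : ℝ) : ℂ) * Complex.I by push_cast; ring,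
      Complex.sin_mul_I, Complex.ofReal_sinh]
  have h4 : Complex.Gamma (1 - t * Complex.I) = (starRingEnd ℂ) (Complex.Gamma (1 + t * Complex.I)) := by
    rw [← Complex.Gamma_conj]
    congr 1
    simp [Complex.ext_iff]
  have hsinh : Real.sinh (Real.pi * t) ≠ 0 := by
    simpa [Real.sinh_eq_zero] using mul_ne_zero Real.pi_ne_zero ht
  have key : (((‖Complex.Gamma (1 + t * Complex.I)‖ ^ 2 : ℝ)) : ℂ)
      = ((Real.pi * t / Real.sinh (Real.pi * t) : ℝ) : ℂ) := by
    rw [show (((‖Complex.Gamma (1 + t * Complex.I)‖ ^ 2 : ℝ)) : ℂ)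
        = Complex.Gamma (1 + t * Complex.I) * (starRingEnd ℂ) (Complex.Gamma (1 + t * Complex.I)) by
      rw [Complex.mul_conj]; norm_cast; exact Complex.sq_norm _]
    rw [← h4, h2, mul_assoc, h1, h3]
    have hI : Complex.I ≠ 0 := Complex.I_ne_zero
    have hS : ((Real.sinh (Real.pi * t) : ℝ) : ℂ) ≠ 0 := by exact_mod_cast hsinh
    calc (↑t : ℂ) * Complex.I
          * ((Real.pi : ℂ) / ((Real.sinh (Real.pi * t) : ℝ) * Complex.I))
        = (↑t * ↑Real.pi / ((Real.sinh (Real.pi * t) : ℝ) : ℂ))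
            * (Complex.I / Complex.I) := by ring
      _ = ↑t * ↑Real.pi / ((Real.sinh (Real.pi * t) : ℝ) : ℂ) := by
            rw [div_self hI, mul_one]
      _ = ((Real.pi * t / Real.sinh (Real.pi * t) : ℝ) : ℂ) := by push_cast; ring
  exact_mod_cast key

lemma gamma_line_even (t : ℝ) :
    ‖Complex.Gamma (1 + (-t : ℝ) * Complex.I)‖
      = ‖Complex.Gamma (1 + t * Complex.I)‖ := by
  have : (1 + ((-t : ℝ) : ℂ) * Complex.I) = (starRingEnd ℂ) (1 + t * Complex.I) := by
    simp [Complex.ext_iff]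
  rw [this, Complex.Gamma_conj, Complex.norm_conj]

private lemma gamma_line_le_one_aux (t : ℝ) (ht : 0 < t) :
    ‖Complex.Gamma (1 + t * Complex.I)‖ ≤ 1 := by
  rw [← Real.sqrt_one, show ‖Complex.Gamma (1 + t * Complex.I)‖
    = Real.sqrt (‖Complex.Gamma (1 + t * Complex.I)‖ ^ 2) by
      rw [Real.sqrt_sq (norm_nonneg _)]]
  apply Real.sqrt_le_sqrt
  rw [gamma_line_sq t ht.ne']
  have h1 : 0 < Real.pi * t := by positivity
  have h2 : Real.pi * t < Real.sinh (Real.pi * t) := Real.self_lt_sinh_iff.mpr h1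
  rw [div_le_one (by linarith)]
  linarith

lemma gamma_line_le_one (t : ℝ) :
    ‖Complex.Gamma (1 + t * Complex.I)‖ ≤ 1 := by
  rcases lt_trichotomy t 0 with h | rfl | h
  · have := gamma_line_even (-t)
    rw [neg_neg] at this
    rw [this]
    exact gamma_line_le_one_aux (-t) (by linarith)
  · simp [Complex.Gamma_one]
  · exact gamma_line_le_one_aux t h

lemma gamma_line_decay (t : ℝ) (ht : 1 ≤ t) :
    ‖Complex.Gamma (1 + t * Complex.I)‖
      ≤ 2 * Real.sqrt (Real.pi * t) * Real.exp (-(Real.pi * t) / 2) := by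
  have ht0 : (0:ℝ) < t := by linarith
  have hx : (2:ℝ) ≤ Real.pi * t := by nlinarith [Real.pi_gt_three]
  set x := Real.pi * t with hxdef
  have hsinh : Real.exp x / 4 ≤ Real.sinh x := by
    rw [Real.sinh_eq]
    have h1 : Real.exp (-x) ≤ 1 := Real.exp_le_one_iff.mpr (by linarith)
    have h2 : (2:ℝ) ≤ Real.exp x := by
      calc (2:ℝ) ≤ 1 + x := by linarith
        _ ≤ Real.exp x := by linarith [Real.add_one_le_exp x]
    linarith
  have hsq : ‖Complex.Gamma (1 + t * Complex.I)‖ ^ 2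
      ≤ (2 * Real.sqrt (Real.pi * t) * Real.exp (-(Real.pi * t) / 2)) ^ 2 := by
    rw [gamma_line_sq t (by linarith)]
    have hrhs : (2 * Real.sqrt (Real.pi * t) * Real.exp (-(Real.pi * t) / 2)) ^ 2
        = 4 * x * Real.exp (-x) := by
      have hexp2 : Real.exp (-(Real.pi * t) / 2) ^ 2 = Real.exp (-(Real.pi * t)) := by
        rw [sq, ← Real.exp_add]; ring_nf
      rw [mul_pow, mul_pow, Real.sq_sqrt (by positivity), hexp2]
      rw [hxdef]; ring_nf
    rw [hrhs]
    have hsinhpos : 0 < Real.sinh x := Real.sinh_pos_iff.mpr (by linarith)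
    rw [div_le_iff₀ hsinhpos]
    have hexp : Real.exp (-x) * Real.exp x = 1 := by rw [← Real.exp_add]; simp
    have h4 : 4 * Real.exp (-x) * Real.sinh x ≥ 4 * Real.exp (-x) * (Real.exp x / 4) := by
      have := Real.exp_pos (-x)
      nlinarith
    nlinarith [Real.exp_pos (-x), Real.sinh_pos_iff.mpr (show 0 < x by linarith)]
  calc ‖Complex.Gamma (1 + t * Complex.I)‖
      = Real.sqrt (‖Complex.Gamma (1 + t * Complex.I)‖ ^ 2) := by
        rw [Real.sqrt_sq (norm_nonneg _)]
    _ ≤ Real.sqrt ((2 * Real.sqrt (Real.pi * t) * Real.exp (-(Real.pi * t) / 2)) ^ 2) :=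
        Real.sqrt_le_sqrt hsq
    _ = 2 * Real.sqrt (Real.pi * t) * Real.exp (-(Real.pi * t) / 2) := by
        rw [Real.sqrt_sq (by positivity)]

lemma integrable_exp_neg_mul_abs {ε : ℝ} (hε : 0 < ε) :
    Integrable (fun t : ℝ => Real.exp (-ε * |t|)) := by
  have h1 : IntegrableOn (fun t : ℝ => Real.exp (-ε * |t|)) (Ici 0) := by
    rw [integrableOn_Ici_iff_integrableOn_Ioi]
    exact (exp_neg_integrableOn_Ioi 0 hε).congr_fun
      (fun t ht => by rw [abs_of_pos ht]) measurableSet_Ioi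
  have h2 : IntegrableOn (fun t : ℝ => Real.exp (-ε * |t|)) (Iic 0) := by
    have A : MeasurableEmbedding fun x : ℝ => -x :=
      (Homeomorph.neg ℝ).isClosedEmbedding.measurableEmbedding
    have hmap : (volume : Measure ℝ).restrict (Iic 0)
        = Measure.map (fun x : ℝ => -x) (volume.restrict (Ici 0)) := by
      rw [← Measure.map_neg_eq_self (volume : Measure ℝ)]
      rw [Measure.restrict_map A.measurable measurableSet_Iic]
      congr 1
      · ext x
        simp
    rw [IntegrableOn, hmap, A.integrable_map_iff]
    exact h1.congr_fun (fun t _ => by simp [Function.comp, abs_neg]) measurableSet_Ici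
  have := h2.union h1
  rw [Iic_union_Ici] at this
  rwa [← integrableOn_univ]

lemma aux_rpow_exp_integrable {σ r : ℝ} (hσ : 0 < σ) (hr : 0 < r) :
    IntegrableOn (fun x : ℝ => x ^ (σ - 1) * Real.exp (-r * x)) (Ioi 0) := by
  have := integrableOn_rpow_mul_exp_neg_mul_rpow (s := σ - 1) (p := 1) (b := r)
    (by linarith) one_pos hr
  exact this.congr_fun (fun x hx => by simp only [Real.rpow_one]) measurableSet_Ioi

lemma cmellin_integrable (s z : ℂ) (hs : 0 < s.re) (hz : 0 < z.re) :
    IntegrableOn (fun x : ℝ => (x : ℂ) ^ (s - 1) * Complex.exp (-(z * x))) (Ioi 0) := by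
  apply Integrable.mono' ((aux_rpow_exp_integrable hs hz).congr_fun
    (fun x hx => rfl) measurableSet_Ioi)
  · apply ContinuousOn.aestronglyMeasurable _ measurableSet_Ioi
    apply ContinuousOn.mul
    · exact fun x hx => (Complex.continuousAt_ofReal_cpow_const x _ (Or.inr (ne_of_gt hx))).continuousWithinAt
    · exact (Complex.continuous_exp.comp
        ((continuous_const.mul Complex.continuous_ofReal).neg)).continuousOn
  · filter_upwards [ae_restrict_mem measurableSet_Ioi] with x hx
    rw [norm_mul,
      Complex.norm_cpow_eq_rpow_re_of_pos hx, Complex.norm_exp]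
    simp only [Complex.sub_re, Complex.one_re, Complex.neg_re, Complex.mul_re,
      Complex.ofReal_re, Complex.ofReal_im, mul_zero, sub_zero]
    exact le_of_eq (by ring_nf)

lemma cmellin_meas (s z : ℂ) :
    AEStronglyMeasurable (fun x : ℝ => (x : ℂ) ^ (s - 1) * (Complex.exp (-(z * x)) * -(x : ℂ)))
      (volume.restrict (Ioi 0)) := by
  apply ContinuousOn.aestronglyMeasurable _ measurableSet_Ioi
  apply ContinuousOn.mul
  · exact fun x hx =>
      (Complex.continuousAt_ofReal_cpow_const x _ (Or.inr (ne_of_gt hx))).continuousWithinAt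
  · exact ((Complex.continuous_exp.comp
      ((continuous_const.mul Complex.continuous_ofReal).neg)).mul
      Complex.continuous_ofReal.neg).continuousOn

lemma cmellin_eq (s : ℂ) (hs : 0 < s.re) :
    Set.EqOn (fun z => ∫ x : ℝ in Ioi 0, (x : ℂ) ^ (s - 1) * Complex.exp (-(z * x)))
      (fun z => Complex.Gamma s * z ^ (-s)) {z : ℂ | 0 < z.re} := by
  have hU : IsOpen {z : ℂ | 0 < z.re} := isOpen_lt continuous_const Complex.continuous_re
  have hF : DifferentiableOn ℂ
      (fun z => ∫ x : ℝ in Ioi 0, (x : ℂ) ^ (s - 1) * Complex.exp (-(z * x)))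
      {z : ℂ | 0 < z.re} := by
    intro z₀ hz₀
    have hz₀' : 0 < z₀.re := hz₀
    have hder := hasDerivAt_integral_of_dominated_loc_of_deriv_le
      (μ := volume.restrict (Ioi 0))
      (F := fun (z : ℂ) (x : ℝ) => (x : ℂ) ^ (s - 1) * Complex.exp (-(z * x)))
      (F' := fun (z : ℂ) (x : ℝ) => (x : ℂ) ^ (s - 1) * (Complex.exp (-(z * x)) * -(x : ℂ)))
      (x₀ := z₀) (bound := fun x => x ^ ((s.re + 1) - 1) * Real.exp (-(z₀.re / 2) * x))
      (Metric.ball_mem_nhds z₀ (half_pos hz₀'))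
      (Filter.Eventually.of_forall fun z => by
        have h := cmellin_meas s z
        apply ContinuousOn.aestronglyMeasurable _ measurableSet_Ioi
        apply ContinuousOn.mul
        · exact fun x hx =>
            (Complex.continuousAt_ofReal_cpow_const x _ (Or.inr (ne_of_gt hx))).continuousWithinAt
        · exact (Complex.continuous_exp.comp
            ((continuous_const.mul Complex.continuous_ofReal).neg)).continuousOn)
      (cmellin_integrable s z₀ hs hz₀')
      (cmellin_meas s z₀)
      ?_ ?_ ?_
    · exact (hder.2.differentiableAt).differentiableWithinAt
    · -- bound
      filter_upwards [ae_restrict_mem measurableSet_Ioi] with x hx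
      intro z hzball
      have hzre : z₀.re / 2 ≤ z.re := by
        have h1 : ‖z - z₀‖ < z₀.re / 2 := by
          simpa [Complex.dist_eq] using hzball
        have h2 : |(z - z₀).re| ≤ ‖z - z₀‖ := Complex.abs_re_le_norm _
        have h3 : |(z - z₀).re| < z₀.re / 2 := h2.trans_lt h1
        have h4 := (abs_lt.mp h3).1
        simp only [Complex.sub_re] at h4
        linarith
      rw [norm_mul, norm_mul,
        Complex.norm_cpow_eq_rpow_re_of_pos hx, Complex.norm_exp, norm_neg,
        Complex.norm_real, Real.norm_eq_abs, abs_of_pos hx]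
      have hexp : Real.exp ((-(z * x)).re) ≤ Real.exp (-(z₀.re / 2) * x) := by
        apply Real.exp_le_exp.mpr
        simp only [Complex.neg_re, Complex.mul_re, Complex.ofReal_re, Complex.ofReal_im,
          mul_zero, sub_zero]
        have := mul_le_mul_of_nonneg_right hzre hx.out.le
        linarith
      calc x ^ (s - 1).re * (Real.exp ((-(z * x)).re) * x)
          ≤ x ^ (s - 1).re * (Real.exp (-(z₀.re / 2) * x) * x) := by
            apply mul_le_mul_of_nonneg_left _ (Real.rpow_nonneg hx.le _)
            exact mul_le_mul_of_nonneg_right hexp hx.le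
        _ = x ^ (s.re + 1 - 1) * Real.exp (-(z₀.re / 2) * x) := by
            rw [show x ^ (s.re + 1 - 1) = x ^ ((s - 1).re + 1) by
              congr 1; simp [Complex.sub_re]]
            rw [Real.rpow_add hx, Real.rpow_one]; ring
    · exact aux_rpow_exp_integrable (by linarith : (0:ℝ) < s.re + 1) (half_pos hz₀')
    · -- differentiability
      filter_upwards [ae_restrict_mem measurableSet_Ioi] with x hx
      intro z hzball
      have h1 : HasDerivAt (fun z : ℂ => -(z * (x : ℂ))) (-(x : ℂ)) z := by
        simpa using ((hasDerivAt_id z).mul_const (x : ℂ)).fun_neg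
      exact (h1.cexp).const_mul _
  have hG : DifferentiableOn ℂ (fun z => Complex.Gamma s * z ^ (-s)) {z : ℂ | 0 < z.re} := by
    intro z hz
    exact (((hasDerivAt_id z).cpow_const
      (Complex.mem_slitPlane_iff.mpr (Or.inl hz))).differentiableAt.const_mul
      _).differentiableWithinAt
  have hpre : IsPreconnected {z : ℂ | 0 < z.re} := (convex_halfSpace_re_gt 0).isPreconnected
  have h1mem : (1 : ℂ) ∈ {z : ℂ | 0 < z.re} := by norm_num
  have realcase : ∀ r : ℝ, 0 < r →
      (∫ x : ℝ in Ioi 0, (x : ℂ) ^ (s - 1) * Complex.exp (-((r : ℂ) * x)))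
        = Complex.Gamma s * (r : ℂ) ^ (-s) := by
    intro r hr
    rw [Complex.integral_cpow_mul_exp_neg_mul_Ioi hs hr, one_div,
      Complex.inv_cpow _ _ (by rw [Complex.arg_ofReal_of_nonneg hr.le]; exact Real.pi_ne_zero.symm),
      ← Complex.cpow_neg, mul_comm]
  have hseq : Filter.Tendsto (fun n : ℕ => ((1 + ((n : ℝ) + 1)⁻¹ : ℝ) : ℂ))
      Filter.atTop (nhdsWithin 1 {(1 : ℂ)}ᶜ) := by
    apply tendsto_nhdsWithin_of_tendsto_nhds_of_eventually_within
    · have h0 : Filter.Tendsto (fun n : ℕ => (1 + ((n : ℝ) + 1)⁻¹ : ℝ)) Filter.atTop (nhds 1) := by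
        have := tendsto_one_div_add_atTop_nhds_zero_nat (𝕜 := ℝ)
        simp only [one_div] at this
        simpa using this.const_add 1
      have h2 := (Complex.continuous_ofReal.tendsto 1).comp h0
      simpa only [Function.comp_def, Complex.ofReal_one] using h2
    · apply Filter.Eventually.of_forall
      intro n
      simp only [Set.mem_compl_iff, Set.mem_singleton_iff]
      intro hcon
      have : (1 + ((n : ℝ) + 1)⁻¹ : ℝ) = 1 := by exact_mod_cast hcon
      have hpos : (0:ℝ) < ((n : ℝ) + 1)⁻¹ := by positivity
      linarith
  have hfreq : ∃ᶠ w in nhdsWithin 1 {(1 : ℂ)}ᶜ,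
      (fun z => ∫ x : ℝ in Ioi 0, (x : ℂ) ^ (s - 1) * Complex.exp (-(z * x))) w
        = (fun z => Complex.Gamma s * z ^ (-s)) w := by
    apply hseq.frequently
    apply Filter.Frequently.of_forall
    intro n
    exact realcase _ (by positivity)
  exact (hF.analyticOnNhd hU).eqOn_of_preconnected_of_frequently_eq
    (hG.analyticOnNhd hU) hpre h1mem hfreq

lemma gamma_line_bound (z : ℂ) (hz : 0 < z.re) :
    ∀ t : ℝ, ‖Complex.Gamma (1 + (t : ℂ) * Complex.I) * z ^ (-(1 + (t : ℂ) * Complex.I))‖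
      ≤ ((‖z‖)⁻¹ * Real.exp Real.pi
          * (1 + 2 * Real.sqrt Real.pi / ((Real.pi / 2 - |z.arg|) / 2)))
        * Real.exp (-((Real.pi / 2 - |z.arg|) / 2) * |t|) := by
  have hzne : z ≠ 0 := fun h => by simp [h] at hz
  have ha : |z.arg| < Real.pi / 2 := Complex.abs_arg_lt_pi_div_two_iff.mpr (Or.inl hz)
  set a := z.arg with hadef
  set ε := (Real.pi / 2 - |a|) / 2 with hεdef
  have hεpos : 0 < ε := by simp only [hεdef]; linarith
  have hεle : ε ≤ Real.pi / 4 := by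
    have h0 : 0 ≤ |a| := abs_nonneg a
    simp only [hεdef]; linarith
  set A := (‖z‖)⁻¹ with hA
  have hA0 : 0 ≤ A := by positivity
  set M := A * Real.exp Real.pi * (1 + 2 * Real.sqrt Real.pi / ε) with hM
  intro t
  set u := |t| with hu
  have hu0 : 0 ≤ u := abs_nonneg t
  have hnorm : ‖Complex.Gamma (1 + (t : ℂ) * Complex.I) * z ^ (-(1 + (t : ℂ) * Complex.I))‖
      = ‖Complex.Gamma (1 + (t : ℂ) * Complex.I)‖ * (A * Real.exp (a * t)) := by
    rw [norm_mul, Complex.norm_cpow_of_ne_zero hzne]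
    congr 1
    have h1 : (-(1 + (t : ℂ) * Complex.I)).re = -1 := by simp
    have h2 : (-(1 + (t : ℂ) * Complex.I)).im = -t := by simp
    rw [h1, h2, Real.rpow_neg_one, mul_neg, Real.exp_neg, div_eq_mul_inv, inv_inv]
  have hGu : ‖Complex.Gamma (1 + (t : ℂ) * Complex.I)‖
      = ‖Complex.Gamma (1 + (u : ℂ) * Complex.I)‖ := by
    rcases le_or_gt 0 t with h | h
    · rw [hu, abs_of_nonneg h]
    · rw [hu, abs_of_neg h]
      have := gamma_line_even t
      rw [show ((-t : ℝ) : ℂ) = ((-t : ℝ) : ℂ) from rfl] at this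
      exact this.symm
  have hat : a * t ≤ |a| * u := by
    calc a * t ≤ |a * t| := le_abs_self _
      _ = |a| * u := by rw [abs_mul]
  rw [hnorm, hGu]
  set G := ‖Complex.Gamma (1 + (u : ℂ) * Complex.I)‖ with hG
  have hG0 : 0 ≤ G := norm_nonneg _
  rcases le_or_gt u 1 with hle | hgt
  · -- small u
    have hG1 : G ≤ 1 := gamma_line_le_one u
    have h1 : Real.exp (a * t) ≤ Real.exp (Real.pi / 2) := by
      apply Real.exp_le_exp.mpr
      calc a * t ≤ |a| * u := hat
        _ ≤ (Real.pi / 2) * 1 := mul_le_mul ha.le hle hu0 (by positivity)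
        _ = Real.pi / 2 := mul_one _
    have h2 : Real.exp (Real.pi / 2) ≤ Real.exp Real.pi * Real.exp (-ε * u) := by
      rw [← Real.exp_add]
      apply Real.exp_le_exp.mpr
      have : ε * u ≤ (Real.pi / 4) * 1 := mul_le_mul hεle hle hu0 (by positivity)
      nlinarith [Real.pi_pos]
    calc G * (A * Real.exp (a * t)) ≤ 1 * (A * Real.exp (Real.pi / 2)) :=
          mul_le_mul hG1 (mul_le_mul_of_nonneg_left h1 hA0) (by positivity) one_pos.le
      _ = A * Real.exp (Real.pi / 2) := one_mul _
      _ ≤ A * (Real.exp Real.pi * Real.exp (-ε * u)) := mul_le_mul_of_nonneg_left h2 hA0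
      _ ≤ M * Real.exp (-ε * u) := by
          rw [hM]
          have hfac : (1:ℝ) ≤ 1 + 2 * Real.sqrt Real.pi / ε := by
            have hc : (0:ℝ) ≤ 2 * Real.sqrt Real.pi / ε := by positivity
            linarith
          calc A * (Real.exp Real.pi * Real.exp (-ε * u))
              = (A * Real.exp Real.pi * Real.exp (-ε * u)) * 1 := by ring
            _ ≤ (A * Real.exp Real.pi * Real.exp (-ε * u))
                  * (1 + 2 * Real.sqrt Real.pi / ε) :=
                mul_le_mul_of_nonneg_left hfac (by positivity)
            _ = A * Real.exp Real.pi * (1 + 2 * Real.sqrt Real.pi / ε)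
                  * Real.exp (-ε * u) := by ring
  · -- large u
    have hGdec : G ≤ 2 * Real.sqrt (Real.pi * u) * Real.exp (-(Real.pi * u) / 2) :=
      gamma_line_decay u hgt.le
    have hsqrtu : Real.sqrt u ≤ u := by
      have h' : Real.sqrt u ≤ Real.sqrt (u ^ 2) := Real.sqrt_le_sqrt (by nlinarith)
      rwa [Real.sqrt_sq hu0] at h'
    have hsqrt : Real.sqrt (Real.pi * u) ≤ Real.sqrt Real.pi * u := by
      rw [Real.sqrt_mul Real.pi_pos.le]
      exact mul_le_mul_of_nonneg_left hsqrtu (Real.sqrt_nonneg _)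
    have hexps : Real.exp (-(Real.pi * u) / 2) * Real.exp (a * t)
        ≤ Real.exp (-(2 * ε) * u) := by
      rw [← Real.exp_add]
      apply Real.exp_le_exp.mpr
      have : |a| * u ≤ (Real.pi / 2 - 2 * ε) * u := by
        apply mul_le_mul_of_nonneg_right _ hu0
        simp only [hεdef]; linarith
      nlinarith [hat]
    have huexp : u ≤ (1 / ε) * Real.exp (ε * u) := by
      have h1 : ε * u ≤ Real.exp (ε * u) := by
        have := Real.add_one_le_exp (ε * u)
        linarith
      rw [div_mul_eq_mul_div, le_div_iff₀ hεpos]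
      linarith [mul_comm ε u]
    have step1 : G * (A * Real.exp (a * t))
        ≤ (2 * (Real.sqrt Real.pi * u)) * Real.exp (-(Real.pi * u) / 2)
            * (A * Real.exp (a * t)) := by
      apply mul_le_mul_of_nonneg_right _ (by positivity)
      calc G ≤ 2 * Real.sqrt (Real.pi * u) * Real.exp (-(Real.pi * u) / 2) := hGdec
        _ ≤ 2 * (Real.sqrt Real.pi * u) * Real.exp (-(Real.pi * u) / 2) := by
            apply mul_le_mul_of_nonneg_right _ (Real.exp_pos _).le
            linarith [hsqrt]
    have step2 : (2 * (Real.sqrt Real.pi * u)) * Real.exp (-(Real.pi * u) / 2)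
          * (A * Real.exp (a * t))
        ≤ A * (2 * Real.sqrt Real.pi) * (u * Real.exp (-(2 * ε) * u)) := by
      have h' := mul_le_mul_of_nonneg_left hexps
        (mul_nonneg (mul_nonneg hA0 (by positivity : (0:ℝ) ≤ 2 * Real.sqrt Real.pi))
          (mul_nonneg (by norm_num : (0:ℝ) ≤ 1) hu0))
      calc (2 * (Real.sqrt Real.pi * u)) * Real.exp (-(Real.pi * u) / 2)
            * (A * Real.exp (a * t))
          = (A * (2 * Real.sqrt Real.pi) * (1 * u))
              * (Real.exp (-(Real.pi * u) / 2) * Real.exp (a * t)) := by ring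
        _ ≤ (A * (2 * Real.sqrt Real.pi) * (1 * u)) * Real.exp (-(2 * ε) * u) := h'
        _ = A * (2 * Real.sqrt Real.pi) * (u * Real.exp (-(2 * ε) * u)) := by ring
    have step3 : u * Real.exp (-(2 * ε) * u) ≤ (1 / ε) * Real.exp (-ε * u) := by
      have h1 : u * Real.exp (-(2 * ε) * u)
          ≤ ((1 / ε) * Real.exp (ε * u)) * Real.exp (-(2 * ε) * u) :=
        mul_le_mul_of_nonneg_right huexp (Real.exp_pos _).le
      have h2 : ((1 / ε) * Real.exp (ε * u)) * Real.exp (-(2 * ε) * u)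
          = (1 / ε) * Real.exp (-ε * u) := by
        rw [mul_assoc, ← Real.exp_add]
        congr 2
        ring
      linarith
    calc G * (A * Real.exp (a * t))
        ≤ A * (2 * Real.sqrt Real.pi) * (u * Real.exp (-(2 * ε) * u)) :=
          le_trans step1 step2
      _ ≤ A * (2 * Real.sqrt Real.pi) * ((1 / ε) * Real.exp (-ε * u)) := by
          apply mul_le_mul_of_nonneg_left step3 (by positivity)
      _ = (A * (2 * Real.sqrt Real.pi / ε)) * Real.exp (-ε * u) := by ring
      _ ≤ M * Real.exp (-ε * u) := by
          apply mul_le_mul_of_nonneg_right _ (Real.exp_pos _).le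
          rw [hM]
          nlinarith [Real.exp_pos Real.pi, Real.add_one_le_exp Real.pi, Real.pi_pos,
            mul_nonneg hA0 (by positivity : (0:ℝ) ≤ 2 * Real.sqrt Real.pi / ε)]

lemma gamma_line_integrable (z : ℂ) (hz : 0 < z.re) :
    Integrable (fun t : ℝ =>
      Complex.Gamma (1 + (t : ℂ) * Complex.I) * z ^ (-(1 + (t : ℂ) * Complex.I))) volume := by
  have hzne : z ≠ 0 := fun h => by simp [h] at hz
  have ha : |z.arg| < Real.pi / 2 := Complex.abs_arg_lt_pi_div_two_iff.mpr (Or.inl hz)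
  have hεpos : 0 < (Real.pi / 2 - |z.arg|) / 2 := by linarith
  have hcont : Continuous (fun t : ℝ =>
      Complex.Gamma (1 + (t : ℂ) * Complex.I) * z ^ (-(1 + (t : ℂ) * Complex.I))) := by
    apply Continuous.mul
    · apply continuous_iff_continuousAt.mpr
      intro t
      have hline : Continuous (fun t : ℝ => 1 + (t : ℂ) * Complex.I) := by continuity
      apply (Complex.differentiableAt_Gamma _ ?_).continuousAt.comp hline.continuousAt
      intro m
      intro hcon
      have := congrArg Complex.re hcon
      simp at this
      linarith [Nat.cast_nonneg (α := ℝ) m]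
    · have heq : (fun t : ℝ => z ^ (-(1 + (t : ℂ) * Complex.I)))
          = fun t : ℝ => Complex.exp (Complex.log z * (-(1 + (t : ℂ) * Complex.I))) :=
        funext fun t => by rw [Complex.cpow_def_of_ne_zero hzne]
      rw [heq]
      continuity
  exact Integrable.mono' ((integrable_exp_neg_mul_abs hεpos).const_mul _)
    hcont.aestronglyMeasurable (Filter.Eventually.of_forall (gamma_line_bound z hz))


/-- (Cahen–Mellin.)  For `Re(z) > 0`, the integral
`(1/(2π))·∫_{−∞}^{∞} Γ(1+it)·z^{−(1+it)} dt` converges absolutely and equals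
`e^{−z}`, where `z^s = exp(s·Log z)` is the principal branch (Mathlib's `cpow`). -/
theorem stmt_8 (z : ℂ) (hz : 0 < z.re) :
    Integrable (fun t : ℝ =>
      Complex.Gamma (1 + (t : ℂ) * Complex.I)
        * z ^ (-(1 + (t : ℂ) * Complex.I))) volume
    ∧ (1 / (2 * (Real.pi : ℂ)))
        * ∫ t : ℝ, Complex.Gamma (1 + (t : ℂ) * Complex.I)
            * z ^ (-(1 + (t : ℂ) * Complex.I))
      = Complex.exp (-z) := by
  have hint := gamma_line_integrable z hz
  refine ⟨hint, ?_⟩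
  set f : ℝ → ℂ := fun x => Complex.exp (-(z * x)) with hfdef
  have hkey : ∀ t : ℝ, mellin f (1 + (t : ℂ) * Complex.I)
      = Complex.Gamma (1 + (t : ℂ) * Complex.I) * z ^ (-(1 + (t : ℂ) * Complex.I)) := by
    intro t
    have hs : (0:ℝ) < (1 + (t : ℂ) * Complex.I).re := by simp
    have h := cmellin_eq (1 + (t : ℂ) * Complex.I) hs hz
    simpa [mellin, smul_eq_mul, hfdef] using h
  have hmc : MellinConvergent f 1 := by
    have hfeq : Set.EqOn (fun x : ℝ => Real.exp (-z.re * x)) (fun x => ‖(x : ℂ) ^ ((1:ℂ) - 1) • f x‖)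
        (Ioi 0) := by
      intro x hx
      simp only [sub_self, Complex.cpow_zero, one_smul, hfdef, norm_mul]
      rw [Complex.norm_exp]
      simp [Complex.mul_re]
    apply MeasureTheory.Integrable.mono' (exp_neg_integrableOn_Ioi 0 hz)
    · apply ContinuousOn.aestronglyMeasurable _ measurableSet_Ioi
      apply ContinuousOn.fun_smul
      · exact fun x hx =>
          (Complex.continuousAt_ofReal_cpow_const x _ (Or.inr (ne_of_gt hx))).continuousWithinAt
      · exact (Complex.continuous_exp.comp
          ((continuous_const.mul Complex.continuous_ofReal).neg)).continuousOn
    · filter_upwards [ae_restrict_mem measurableSet_Ioi] with x hx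
      exact le_of_eq (by simpa using (hfeq hx).symm)
  have hFf : Complex.VerticalIntegrable (mellin f) 1 := by
    have heq : (fun y : ℝ => mellin f ((1:ℝ) + y * Complex.I))
        = fun y : ℝ => Complex.Gamma (1 + (y : ℂ) * Complex.I)
            * z ^ (-(1 + (y : ℂ) * Complex.I)) :=
      funext fun y => by rw [Complex.ofReal_one]; exact hkey y
    show Integrable (fun y : ℝ => mellin f ((1:ℝ) + y * Complex.I)) volume
    rw [heq]
    exact hint
  have hcf : ContinuousAt f 1 := by
    apply Continuous.continuousAt
    exact Complex.continuous_exp.comp ((continuous_const.mul Complex.continuous_ofReal).neg)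
  have hinv := mellinInv_mellin_eq 1 f one_pos hmc hFf hcf
  rw [mellinInv] at hinv
  have hsimp : (fun y : ℝ => ((1:ℝ) : ℂ) ^ (-((1:ℝ) + y * Complex.I))
        • mellin f ((1:ℝ) + y * Complex.I))
      = fun y : ℝ => Complex.Gamma (1 + (y : ℂ) * Complex.I)
          * z ^ (-(1 + (y : ℂ) * Complex.I)) := by
    funext y
    rw [Complex.ofReal_one, Complex.one_cpow, one_smul]
    exact hkey y
  rw [hsimp] at hinv
  have hf1 : f 1 = Complex.exp (-z) := by simp [hfdef]
  rw [hf1] at hinv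
  rw [← hinv, Complex.real_smul]
  congr 1
  push_cast
  ring
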